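/- Let $s \geq 1$, $t \geq 3$ be integers, and let $G$ be an $L'_{s,t}$-free bipartite graph with bipartition $A \cup B$, $|B| = n$, in which every vertex of $A$ has degree at least $\delta$. Then for any subset $U \subseteq A$ with $|U| \geq \frac{8(s+t)n}{\delta}$ and $|U| \geq 2$, the number of light edges (pairs $\{u,v\} \subseteq U$ with $1 \leq |N_G(u)\cap N_G(v)| < \binom{s+t-1}{2}$) within $U$ is at least $\frac{\delta^2}{8(s+t)^3 n}\binom{|U|}{2}$. -/

import Mathlib

open Finset SimpleGraph

/-- `L_{s,t}`: complete graph on `S ∪ T` (`|S| = s`, `|T| = t-1`) minus the edges inside `S`;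
    i.e. `xy` is an edge iff `x ≠ y` and at least one of them lies in `T` (the right summand). -/
def Lst (s t : ℕ) : SimpleGraph (Fin s ⊕ Fin (t - 1)) :=
  SimpleGraph.fromRel (fun x y => x.isRight ∨ y.isRight)

/-- The subdivision of a graph `H`: the bipartite graph on `V(H) ⊕ E(H)` joining a vertex
    to an edge iff the vertex is an endpoint of the edge. -/
def Subdiv {V : Type*} (H : SimpleGraph V) : SimpleGraph (V ⊕ H.edgeSet) :=
  SimpleGraph.fromRel
    (fun x y => ∃ (v : V) (e : H.edgeSet), x = Sum.inl v ∧ y = Sum.inr e ∧ v ∈ (e : Sym2 V))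

/-- `G` contains a copy of `H` (a subgraph isomorphic to `H`). -/
def Contains {V W : Type*} (G : SimpleGraph V) (H : SimpleGraph W) : Prop :=
  ∃ f : H →g G, Function.Injective f


lemma card_eq_sum_univ_ite {α : Type*} [Fintype α] [DecidableEq α] (s : Finset α) :
    s.card = ∑ b : α, if b ∈ s then 1 else 0 := by
  rw [← card_filter]
  congr 1
  ext b; simp

lemma doublecount {V : Type*} [Fintype V] [DecidableEq V] (G : SimpleGraph V)
    [DecidableRel G.Adj] (U : Finset V) (Q : V × V → Prop) [DecidablePred Q] :
    ∑ p ∈ U.offDiag.filter Q, (G.neighborFinset p.1 ∩ G.neighborFinset p.2).card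
      = ∑ b : V, ((G.neighborFinset b ∩ U).offDiag.filter Q).card := by
  have h1 : ∀ p : V × V, (G.neighborFinset p.1 ∩ G.neighborFinset p.2).card
      = ∑ b : V, if b ∈ G.neighborFinset p.1 ∩ G.neighborFinset p.2 then 1 else 0 :=
    fun p => card_eq_sum_univ_ite _
  calc ∑ p ∈ U.offDiag.filter Q, (G.neighborFinset p.1 ∩ G.neighborFinset p.2).card
      = ∑ p ∈ U.offDiag.filter Q, ∑ b : V,
          if b ∈ G.neighborFinset p.1 ∩ G.neighborFinset p.2 then 1 else 0 :=
        Finset.sum_congr rfl (fun p _ => h1 p)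
    _ = ∑ b : V, ∑ p ∈ U.offDiag.filter Q,
          if b ∈ G.neighborFinset p.1 ∩ G.neighborFinset p.2 then 1 else 0 :=
        Finset.sum_comm
    _ = ∑ b : V, ((U.offDiag.filter Q).filter
          (fun p => b ∈ G.neighborFinset p.1 ∩ G.neighborFinset p.2)).card := by
        refine Finset.sum_congr rfl (fun b _ => ?_)
        rw [card_filter]
    _ = ∑ b : V, ((G.neighborFinset b ∩ U).offDiag.filter Q).card := by
        refine Finset.sum_congr rfl (fun b _ => ?_)
        congr 1
        ext ⟨u, v⟩
        simp only [mem_filter, mem_offDiag, mem_inter, mem_neighborFinset]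
        constructor
        · rintro ⟨⟨⟨hu, hv, huv⟩, hQ⟩, h1, h2⟩
          exact ⟨⟨⟨(G.adj_comm _ _).mp h1, hu⟩, ⟨(G.adj_comm _ _).mp h2, hv⟩, huv⟩, hQ⟩
        · rintro ⟨⟨⟨h1, hu⟩, ⟨h2, hv⟩, huv⟩, hQ⟩
          exact ⟨⟨⟨hu, hv, huv⟩, hQ⟩, (G.adj_comm _ _).mp h1, (G.adj_comm _ _).mp h2⟩

lemma degcount {V : Type*} [Fintype V] [DecidableEq V] (G : SimpleGraph V)
    [DecidableRel G.Adj] (U : Finset V) :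
    ∑ b : V, (G.neighborFinset b ∩ U).card = ∑ u ∈ U, G.degree u := by
  have h1 : ∀ b : V, G.neighborFinset b ∩ U = U.filter (fun u => G.Adj b u) := by
    intro b; ext u; simp [mem_neighborFinset, and_comm]
  calc ∑ b : V, (G.neighborFinset b ∩ U).card
      = ∑ b : V, ∑ u ∈ U, if G.Adj b u then 1 else 0 := by
        refine Finset.sum_congr rfl (fun b _ => ?_)
        rw [h1 b, card_filter]
    _ = ∑ u ∈ U, ∑ b : V, if G.Adj b u then 1 else 0 := Finset.sum_comm
    _ = ∑ u ∈ U, G.degree u := by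
        refine Finset.sum_congr rfl (fun u _ => ?_)
        rw [← card_filter]
        have : univ.filter (fun b => G.Adj b u) = G.neighborFinset u := by
          ext b; simp [mem_neighborFinset, G.adj_comm]
        rw [this, G.card_neighborFinset_eq_degree]


lemma turan_weak {V : Type*} [DecidableEq V] (r : V → V → Prop) [DecidableRel r]
    (hsymm : ∀ u v, r u v → r v u) :
    ∀ (k : ℕ) (W : Finset V),
      (¬ ∃ S : Finset V, S ⊆ W ∧ S.card = k + 1 ∧ ∀ x ∈ S, ∀ y ∈ S, x ≠ y → r x y) →
      (((W.offDiag.filter fun p => r p.1 p.2).card : ℝ)) ≤ (1 - 1/k) * (W.card : ℝ)^2 := by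
  intro k
  induction k with
  | zero =>
    intro W _
    have h1 : (W.offDiag.filter fun p => r p.1 p.2).card ≤ W.card * W.card := by
      refine le_trans (card_filter_le _ _) ?_
      rw [offDiag_card]; exact Nat.sub_le _ _
    have := (Nat.cast_le (α := ℝ)).mpr h1
    push_cast at this
    norm_num
    nlinarith [this]
  | succ k ih =>
    intro W hW
    rcases Nat.eq_zero_or_pos k with rfl | hkpos
    · -- target bound is 0: no related pair at all
      have hempty : (W.offDiag.filter fun p => r p.1 p.2) = ∅ := by
        rw [filter_eq_empty_iff]
        rintro ⟨u, v⟩ hp hr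
        rw [mem_offDiag] at hp
        refine hW ⟨{u, v}, ?_, ?_, ?_⟩
        · exact insert_subset hp.1 (singleton_subset_iff.mpr hp.2.1)
        · exact card_pair hp.2.2
        · intro x hx y hy hxy
          simp only [mem_insert, mem_singleton] at hx hy
          rcases hx with rfl | rfl <;> rcases hy with rfl | rfl
          · exact absurd rfl hxy
          · exact hr
          · exact hsymm _ _ hr
          · exact absurd rfl hxy
      rw [hempty]
      norm_num
    · rcases W.eq_empty_or_nonempty with rfl | hne
      · simp
      obtain ⟨x, hxW, hmax⟩ :=
        W.exists_max_image (fun y => (W.filter fun z => z ≠ y ∧ r y z).card) hne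
      set N := W.filter (fun z => z ≠ x ∧ r x z) with hN
      have hNW : N ⊆ W := filter_subset _ _
      have hdm : N.card ≤ W.card := card_le_card hNW
      -- N has no (k+1)-clique
      have hNfree : ¬ ∃ S : Finset V, S ⊆ N ∧ S.card = k + 1 ∧
          ∀ x ∈ S, ∀ y ∈ S, x ≠ y → r x y := by
        rintro ⟨S, hSN, hScard, hSpair⟩
        have hxS : x ∉ S := fun hxS => ((mem_filter.mp (hSN hxS)).2.1) rfl
        refine hW ⟨insert x S, ?_, ?_, ?_⟩
        · exact insert_subset hxW (hSN.trans hNW)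
        · rw [card_insert_of_notMem hxS, hScard]
        · intro a ha b hb hab
          rcases mem_insert.mp ha with rfl | haS
          · rcases mem_insert.mp hb with rfl | hbS
            · exact absurd rfl hab
            · exact (mem_filter.mp (hSN hbS)).2.2
          · rcases mem_insert.mp hb with rfl | hbS
            · exact hsymm _ _ (mem_filter.mp (hSN haS)).2.2
            · exact hSpair a haS b hbS hab
      have hTN := ih N hNfree
      -- split the pair count
      have hsplit : W.offDiag.filter (fun p => r p.1 p.2) ⊆
          ((N.offDiag.filter fun p => r p.1 p.2)
            ∪ (W \ N).biUnion (fun u => {u} ×ˢ (W.filter fun z => z ≠ u ∧ r u z)))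
            ∪ (W \ N).biUnion (fun u => (W.filter fun z => z ≠ u ∧ r u z) ×ˢ {u}) := by
        rintro ⟨u, v⟩ hp
        rw [mem_filter, mem_offDiag] at hp
        obtain ⟨⟨huW, hvW, huv⟩, hruv⟩ := hp
        simp only [mem_union, mem_biUnion, mem_product, mem_filter, mem_offDiag,
          mem_sdiff, mem_singleton]
        by_cases huN : u ∈ N
        · by_cases hvN : v ∈ N
          · exact Or.inl (Or.inl ⟨⟨huN, hvN, huv⟩, hruv⟩)
          · exact Or.inr ⟨v, ⟨hvW, hvN⟩, ⟨huW, huv, hsymm _ _ hruv⟩, rfl⟩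
        · exact Or.inl (Or.inr ⟨u, ⟨huW, huN⟩, rfl, hvW, Ne.symm huv, hruv⟩)
      have hb1 : ((W \ N).biUnion fun u => {u} ×ˢ (W.filter fun z => z ≠ u ∧ r u z)).card ≤
          (W.card - N.card) * N.card := by
        refine le_trans card_biUnion_le ?_
        have hub : ∀ u ∈ W \ N, ({u} ×ˢ (W.filter fun z => z ≠ u ∧ r u z)).card ≤ N.card := by
          intro u hu
          rw [card_product, card_singleton, one_mul]
          exact hmax u (mem_sdiff.mp hu).1
        calc ∑ u ∈ W \ N, ({u} ×ˢ (W.filter fun z => z ≠ u ∧ r u z)).card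
            ≤ ∑ _u ∈ W \ N, N.card := sum_le_sum hub
          _ = (W.card - N.card) * N.card := by rw [sum_const, smul_eq_mul, card_sdiff_of_subset hNW]
      have hb2 : ((W \ N).biUnion fun u => (W.filter fun z => z ≠ u ∧ r u z) ×ˢ {u}).card ≤
          (W.card - N.card) * N.card := by
        refine le_trans card_biUnion_le ?_
        have hub : ∀ u ∈ W \ N, ((W.filter fun z => z ≠ u ∧ r u z) ×ˢ {u}).card ≤ N.card := by
          intro u hu
          rw [card_product, card_singleton, mul_one]
          exact hmax u (mem_sdiff.mp hu).1
        calc ∑ u ∈ W \ N, ((W.filter fun z => z ≠ u ∧ r u z) ×ˢ {u}).card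
            ≤ ∑ _u ∈ W \ N, N.card := sum_le_sum hub
          _ = (W.card - N.card) * N.card := by rw [sum_const, smul_eq_mul, card_sdiff_of_subset hNW]
      have hc : (W.offDiag.filter fun p => r p.1 p.2).card ≤
          ((N.offDiag.filter fun p => r p.1 p.2).card + (W.card - N.card) * N.card)
            + (W.card - N.card) * N.card := by
        refine le_trans (card_le_card hsplit) (le_trans (card_union_le _ _) ?_)
        exact add_le_add (le_trans (card_union_le _ _) (add_le_add le_rfl hb1)) hb2
      have hcr : ((W.offDiag.filter fun p => r p.1 p.2).card : ℝ) ≤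
          ((N.offDiag.filter fun p => r p.1 p.2).card : ℝ)
            + 2 * (((W.card : ℝ) - N.card) * N.card) := by
        have h := (Nat.cast_le (α := ℝ)).mpr hc
        push_cast [Nat.cast_sub hdm] at h
        linarith
      have hK1 : (1:ℝ) ≤ (k:ℝ) := by exact_mod_cast hkpos
      have hK0 : (0:ℝ) < (k:ℝ) := by linarith
      have hd0 : (0:ℝ) ≤ (N.card:ℝ) := Nat.cast_nonneg _
      have hdm' : (N.card:ℝ) ≤ (W.card:ℝ) := Nat.cast_le.mpr hdm
      have hTN' : (k:ℝ) * ((N.offDiag.filter fun p => r p.1 p.2).card : ℝ)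
          ≤ ((k:ℝ) - 1) * (N.card:ℝ)^2 := by
        have h := mul_le_mul_of_nonneg_left hTN (le_of_lt hK0)
        have e : (k:ℝ) * ((1 - 1/(k:ℝ)) * (N.card:ℝ)^2) = ((k:ℝ)-1) * (N.card:ℝ)^2 := by
          field_simp
        linarith [h, e]
      have e2 : (k:ℝ)*((k:ℝ)+1)*((1 - 1/((k:ℝ)+1))*(W.card:ℝ)^2)
          = (k:ℝ)^2*(W.card:ℝ)^2 := by
        field_simp; ring
      have key : (k:ℝ)*((k:ℝ)+1)*((W.offDiag.filter fun p => r p.1 p.2).card : ℝ)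
          ≤ (k:ℝ)*((k:ℝ)+1)*((1 - 1/((k:ℝ)+1))*(W.card:ℝ)^2) := by
        rw [e2]
        nlinarith [sq_nonneg ((k:ℝ)*(W.card:ℝ) - ((k:ℝ)+1)*(N.card:ℝ)),
          mul_le_mul_of_nonneg_left hcr (by positivity : (0:ℝ) ≤ (k:ℝ)*((k:ℝ)+1)),
          mul_le_mul_of_nonneg_left hTN' (by linarith : (0:ℝ) ≤ (k:ℝ)+1), hd0, hdm', hK0]
      have goal' := (mul_le_mul_iff_right₀ (by positivity : (0:ℝ) < (k:ℝ)*((k:ℝ)+1))).mp key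
      push_cast
      convert goal' using 2


lemma no_heavy_clique {V : Type*} [Fintype V] [DecidableEq V] (G : SimpleGraph V)
    [DecidableRel G.Adj] (A B : Finset V) (s t : ℕ) (hs : 1 ≤ s) (ht : 3 ≤ t)
    (hdisj : Disjoint A B)
    (hbip : ∀ u v, G.Adj u v → (u ∈ A ∧ v ∈ B) ∨ (u ∈ B ∧ v ∈ A))
    (hfree : ¬ Contains G (Subdiv (Lst s t)))
    (S : Finset V) (hSA : S ⊆ A) (hcard : S.card = s + t - 1)
    (hpair : ∀ x ∈ S, ∀ y ∈ S, x ≠ y →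
      (s + t - 1).choose 2 ≤ (G.neighborFinset x ∩ G.neighborFinset y).card) : False := by
  classical
  have hq : Fintype.card (Fin s ⊕ Fin (t - 1)) = s + t - 1 := by
    simp only [Fintype.card_sum, Fintype.card_fin]; omega
  obtain φ : (Fin s ⊕ Fin (t - 1)) ≃ {x // x ∈ S} :=
    Fintype.equivOfCardEq (by rw [hq, Fintype.card_coe, hcard])
  set w : Fin s ⊕ Fin (t - 1) → V := fun i => (φ i : V) with hw
  have hwinj : Function.Injective w := fun a b h => φ.injective (Subtype.ext h)
  have hwS : ∀ i, w i ∈ S := fun i => (φ i).2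
  -- the common neighbourhood attached to a (potential) edge
  set F : Sym2 (Fin s ⊕ Fin (t - 1)) → Finset V :=
    Sym2.lift ⟨fun a b => G.neighborFinset (w a) ∩ G.neighborFinset (w b),
      fun a b => inter_comm _ _⟩ with hF
  have hFcard : ∀ e ∈ (Lst s t).edgeSet, (s + t - 1).choose 2 ≤ (F e).card := by
    intro e he
    induction e with
    | _ a b =>
      have hadj : (Lst s t).Adj a b := (mem_edgeSet _).mp he
      have hab : a ≠ b := hadj.ne
      simpa [hF, Sym2.lift_mk] using
        hpair (w a) (hwS a) (w b) (hwS b) (fun h => hab (hwinj h))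
  have hFsub : ∀ (e : Sym2 (Fin s ⊕ Fin (t-1))) (v : Fin s ⊕ Fin (t-1)),
      v ∈ e → F e ⊆ G.neighborFinset (w v) := by
    intro e v hv
    induction e with
    | _ a b =>
      rcases Sym2.mem_iff.mp hv with rfl | rfl
      · simpa [hF, Sym2.lift_mk] using inter_subset_left
      · simpa [hF, Sym2.lift_mk] using inter_subset_right
  haveI : Fintype ((Lst s t).edgeSet : Set (Sym2 (Fin s ⊕ Fin (t-1)))) := Fintype.ofFinite _
  set F' : ((Lst s t).edgeSet : Set (Sym2 (Fin s ⊕ Fin (t-1)))) → Finset V :=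
    fun e => F (e : Sym2 (Fin s ⊕ Fin (t-1))) with hF'
  -- Hall's condition
  have hall : ∀ s' : Finset ((Lst s t).edgeSet : Set (Sym2 (Fin s ⊕ Fin (t-1)))),
      s'.card ≤ (s'.biUnion F').card := by
    intro s'
    rcases s'.eq_empty_or_nonempty with rfl | ⟨e0, he0⟩
    · simp
    have h1 : s'.card ≤ (s + t - 1).choose 2 := by
      calc s'.card ≤ Fintype.card ((Lst s t).edgeSet : Set (Sym2 (Fin s ⊕ Fin (t-1)))) :=
            card_le_univ s'
        _ = (Lst s t).edgeFinset.card := (edgeFinset_card (G := Lst s t)).symm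
        _ ≤ (Fintype.card (Fin s ⊕ Fin (t-1))).choose 2 := card_edgeFinset_le_card_choose_two
        _ = (s + t - 1).choose 2 := by rw [hq]
    have h2 : (s + t - 1).choose 2 ≤ (F' e0).card := hFcard _ e0.2
    have h3 : F' e0 ⊆ s'.biUnion F' := subset_biUnion_of_mem F' he0
    exact le_trans (le_trans h1 h2) (card_le_card h3)
  obtain ⟨g, hginj, hgmem⟩ :=
    (Finset.all_card_le_biUnion_card_iff_exists_injective F').mp hall
  -- g e is adjacent to w v for each endpoint v of e
  have hadj : ∀ (e : ((Lst s t).edgeSet : Set (Sym2 (Fin s ⊕ Fin (t-1)))))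
      (v : Fin s ⊕ Fin (t-1)), v ∈ (e : Sym2 (Fin s ⊕ Fin (t-1))) → G.Adj (w v) (g e) := by
    intro e v hv
    have := hFsub _ v hv (hgmem e)
    exact (mem_neighborFinset _ _ _).mp this
  -- g e lies in B
  have hgB : ∀ e, g e ∈ B := by
    intro e
    obtain ⟨a, ha⟩ : ∃ a, a ∈ (e : Sym2 (Fin s ⊕ Fin (t-1))) := by
      induction (e : Sym2 (Fin s ⊕ Fin (t-1))) with
      | _ a b => exact ⟨a, Sym2.mem_mk_left a b⟩
    have hadj' := hadj e a ha
    rcases hbip _ _ hadj' with ⟨_, hB⟩ | ⟨hwB, _⟩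
    · exact hB
    · exact absurd hwB (Finset.disjoint_left.mp hdisj (hSA (hwS a)))
  have hwA : ∀ i, w i ∈ A := fun i => hSA (hwS i)
  -- build the homomorphism
  refine hfree ⟨⟨Sum.elim w g, ?_⟩, ?_⟩
  · rintro x y hxy
    rw [Subdiv, fromRel_adj] at hxy
    obtain ⟨-, h | h⟩ := hxy
    · obtain ⟨v, e, rfl, rfl, hv⟩ := h
      exact hadj e v hv
    · obtain ⟨v, e, rfl, rfl, hv⟩ := h
      exact (hadj e v hv).symm
  · rintro (v1 | e1) (v2 | e2) h
    · exact congrArg Sum.inl (hwinj (h : w v1 = w v2))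
    · have h' : w v1 = g e2 := h
      exact absurd (hgB e2) (Finset.disjoint_left.mp hdisj (h' ▸ hwA v1))
    · have h' : g e1 = w v2 := h
      exact absurd (hgB e1) (Finset.disjoint_left.mp hdisj (h' ▸ hwA v2))
    · exact congrArg Sum.inr (hginj (h : g e1 = g e2))

set_option maxHeartbeats 1000000 in
theorem stmt3 {V : Type*} [Fintype V] [DecidableEq V] (G : SimpleGraph V)
    [DecidableRel G.Adj] (A B : Finset V) (s t : ℕ) (hs : 1 ≤ s) (ht : 3 ≤ t)
    (hdisj : Disjoint A B) (hpart : A ∪ B = Finset.univ)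
    (hbip : ∀ u v, G.Adj u v → (u ∈ A ∧ v ∈ B) ∨ (u ∈ B ∧ v ∈ A))
    (hfree : ¬ Contains G (Subdiv (Lst s t)))
    (n : ℕ) (hB : B.card = n) (δ : ℕ)
    (hdeg : ∀ a ∈ A, δ ≤ G.degree a)
    (U : Finset V) (hUA : U ⊆ A)
    (hU1 : (8 * (s + t) * n : ℝ) / δ ≤ U.card) (hU2 : 2 ≤ U.card) :
    (δ : ℝ) ^ 2 / (8 * (s + t) ^ 3 * n) * (U.card.choose 2) ≤
      ((U.offDiag.filter (fun p =>
        1 ≤ (G.neighborFinset p.1 ∩ G.neighborFinset p.2).card ∧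
        (G.neighborFinset p.1 ∩ G.neighborFinset p.2).card < (s + t - 1).choose 2)).card : ℝ)
        / 2 := by
  classical
  have hclique : ¬ ∃ S : Finset V, S ⊆ A ∧ S.card = s + t - 1 ∧ ∀ x ∈ S, ∀ y ∈ S, x ≠ y →
      (s + t - 1).choose 2 ≤ (G.neighborFinset x ∩ G.neighborFinset y).card := by
    rintro ⟨S, h1, h2, h3⟩
    exact no_heavy_clique G A B s t hs ht hdisj hbip hfree S h1 h2 h3
  classical
  rcases Nat.eq_zero_or_pos δ with rfl | hδpos
  · norm_num
    positivity
  rcases Nat.eq_zero_or_pos n with rfl | hnpos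
  · norm_num
    positivity
  set C := (s + t - 1).choose 2 with hC
  set k := s + t - 2 with hk
  have hst4 : 4 ≤ s + t := by omega
  have hk2 : 2 ≤ k := by omega
  have hkq : k + 1 = s + t - 1 := by omega
  set cod : V × V → ℕ :=
    fun p => (G.neighborFinset p.1 ∩ G.neighborFinset p.2).card with hcod
  set d : V → ℕ := fun b => (G.neighborFinset b ∩ U).card with hd
  -- vanishing outside B
  have hWempty : ∀ b, b ∉ B → G.neighborFinset b ∩ U = ∅ := by
    intro b hb
    rw [eq_empty_iff_forall_notMem]
    intro u hu
    rw [mem_inter, mem_neighborFinset] at hu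
    rcases hbip _ _ hu.1 with ⟨_, huB⟩ | ⟨hbB, _⟩
    · exact Finset.disjoint_left.mp hdisj (hUA hu.2) huB
    · exact hb hbB
  -- no heavy clique in any subset of U
  have hnoclique : ∀ W : Finset V, W ⊆ U → ¬ ∃ S : Finset V, S ⊆ W ∧ S.card = k + 1 ∧
      ∀ x ∈ S, ∀ y ∈ S, x ≠ y →
        (x ∈ U ∧ y ∈ U ∧ C ≤ (G.neighborFinset x ∩ G.neighborFinset y).card) := by
    rintro W hWU ⟨S, hSW, hScard, hSp⟩
    exact hclique ⟨S, fun x hx => hUA (hWU (hSW hx)), by omega,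
      fun x hx y hy hxy => (hSp x hx y hy hxy).2.2⟩
  -- per-vertex heavy bound
  have hheavyb : ∀ b : V,
      (((G.neighborFinset b ∩ U).offDiag.filter (fun p => C ≤ cod p)).card : ℝ)
        ≤ (1 - 1/(k:ℝ)) * ((d b : ℝ))^2 := by
    intro b
    have hWU : G.neighborFinset b ∩ U ⊆ U := inter_subset_right
    have heq : (G.neighborFinset b ∩ U).offDiag.filter (fun p => C ≤ cod p)
        = (G.neighborFinset b ∩ U).offDiag.filter
            (fun p => (fun u v => u ∈ U ∧ v ∈ U ∧
              C ≤ (G.neighborFinset u ∩ G.neighborFinset v).card) p.1 p.2) := by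
      refine filter_congr ?_
      intro p hp
      rw [mem_offDiag] at hp
      simp only [hcod]
      constructor
      · intro h; exact ⟨hWU hp.1, hWU hp.2.1, h⟩
      · intro h; exact h.2.2
    rw [heq]
    exact turan_weak
      (fun u v => u ∈ U ∧ v ∈ U ∧ C ≤ (G.neighborFinset u ∩ G.neighborFinset v).card)
      (fun u v h => ⟨h.2.1, h.1, by rw [inter_comm]; exact h.2.2⟩) k _ (hnoclique _ hWU)
  -- total cherry count
  have htot : ∑ p ∈ U.offDiag, cod p = ∑ b ∈ B, (d b * d b - d b) := by
    have h0 := doublecount G U (fun _ => True)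
    simp only [filter_true] at h0
    show ∑ p ∈ U.offDiag, (G.neighborFinset p.1 ∩ G.neighborFinset p.2).card
        = ∑ b ∈ B, ((G.neighborFinset b ∩ U).card * (G.neighborFinset b ∩ U).card
            - (G.neighborFinset b ∩ U).card)
    rw [h0]
    have h1 : ∑ b ∈ B, ((G.neighborFinset b ∩ U).offDiag).card
        = ∑ b : V, ((G.neighborFinset b ∩ U).offDiag).card :=
      Finset.sum_subset (subset_univ B) (fun b _ hb => by rw [hWempty b hb]; simp)
    rw [← h1]
    exact sum_congr rfl fun b _ => Finset.offDiag_card _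
  -- heavy cherry count
  have hheavy : ∑ p ∈ U.offDiag.filter (fun p => C ≤ cod p), cod p
      = ∑ b ∈ B, ((G.neighborFinset b ∩ U).offDiag.filter (fun p => C ≤ cod p)).card := by
    have h0 := doublecount G U (fun p => C ≤ cod p)
    show ∑ p ∈ U.offDiag.filter (fun p => C ≤ cod p),
        (G.neighborFinset p.1 ∩ G.neighborFinset p.2).card
      = ∑ b ∈ B, ((G.neighborFinset b ∩ U).offDiag.filter (fun p => C ≤ cod p)).card
    rw [h0]
    have h1 : ∑ b ∈ B, ((G.neighborFinset b ∩ U).offDiag.filter (fun p => C ≤ cod p)).card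
        = ∑ b : V, ((G.neighborFinset b ∩ U).offDiag.filter (fun p => C ≤ cod p)).card :=
      Finset.sum_subset (subset_univ B) (fun b _ hb => by rw [hWempty b hb]; simp)
    exact h1.symm
  -- light part
  set Lord := (U.offDiag.filter (fun p => 1 ≤ cod p ∧ cod p < C)).card with hLord
  have hlight : ∑ p ∈ U.offDiag.filter (fun p => ¬ C ≤ cod p), cod p ≤ Lord * C := by
    rw [← sum_filter_add_sum_filter_not (U.offDiag.filter (fun p => ¬ C ≤ cod p))
      (fun p => 1 ≤ cod p) cod]
    have h2 : ∑ p ∈ (U.offDiag.filter (fun p => ¬ C ≤ cod p)).filter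
        (fun p => ¬ 1 ≤ cod p), cod p = 0 := by
      refine sum_eq_zero fun p hp => ?_
      have := (mem_filter.mp hp).2
      omega
    rw [h2, add_zero]
    have h3 : (U.offDiag.filter (fun p => ¬ C ≤ cod p)).filter (fun p => 1 ≤ cod p)
        = U.offDiag.filter (fun p => 1 ≤ cod p ∧ cod p < C) := by
      rw [filter_filter]
      exact filter_congr fun p _ => by constructor <;> (intro h; omega)
    calc ∑ p ∈ (U.offDiag.filter (fun p => ¬ C ≤ cod p)).filter (fun p => 1 ≤ cod p), cod p
        ≤ ((U.offDiag.filter (fun p => ¬ C ≤ cod p)).filter (fun p => 1 ≤ cod p)).card • C := by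
          refine sum_le_card_nsmul _ _ _ fun p hp => ?_
          have := (mem_filter.mp (mem_filter.mp hp).1).2
          omega
      _ = Lord * C := by rw [h3, smul_eq_mul, hLord]
  -- degree sum
  have hσδ : δ * U.card ≤ ∑ b ∈ B, d b := by
    have h1 : ∑ b ∈ B, (G.neighborFinset b ∩ U).card
        = ∑ b : V, (G.neighborFinset b ∩ U).card :=
      Finset.sum_subset (subset_univ B) (fun b _ hb => by rw [hWempty b hb]; simp)
    show δ * U.card ≤ ∑ b ∈ B, (G.neighborFinset b ∩ U).card
    rw [h1, degcount G U]
    calc δ * U.card = ∑ _u ∈ U, δ := by rw [sum_const, smul_eq_mul, mul_comm]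
      _ ≤ ∑ u ∈ U, G.degree u := sum_le_sum fun u hu => hdeg u (hUA hu)
  -- now go to the reals
  set σ : ℝ := ∑ b ∈ B, (d b : ℝ) with hσ
  set D2 : ℝ := ∑ b ∈ B, (d b : ℝ)^2 with hD2
  have hcast : ∀ x : ℕ, ((x*x - x : ℕ) : ℝ) = (x:ℝ)^2 - x := by
    intro x
    rcases Nat.eq_zero_or_pos x with rfl | hx
    · simp
    · rw [Nat.cast_sub (Nat.le_mul_of_pos_left x hx)]; push_cast; ring
  have hsplit := sum_filter_add_sum_filter_not U.offDiag (fun p => C ≤ cod p) cod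
  -- the master inequality over ℝ
  have hstar : D2 - σ ≤ (1 - 1/(k:ℝ)) * D2 + (Lord : ℝ) * C := by
    have e1 : ((∑ p ∈ U.offDiag, cod p : ℕ) : ℝ) = D2 - σ := by
      rw [htot, Nat.cast_sum, hD2, hσ, ← sum_sub_distrib]
      exact sum_congr rfl fun b _ => hcast (d b)
    have e2 : ((∑ p ∈ U.offDiag.filter (fun p => C ≤ cod p), cod p : ℕ) : ℝ)
        ≤ (1 - 1/(k:ℝ)) * D2 := by
      rw [hheavy, Nat.cast_sum, hD2, mul_sum]
      exact sum_le_sum fun b _ => hheavyb b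
    have e3 : ((∑ p ∈ U.offDiag.filter (fun p => ¬ C ≤ cod p), cod p : ℕ) : ℝ)
        ≤ (Lord : ℝ) * C := by
      exact_mod_cast hlight
    calc D2 - σ = ((∑ p ∈ U.offDiag, cod p : ℕ) : ℝ) := e1.symm
      _ = ((∑ p ∈ U.offDiag.filter (fun p => C ≤ cod p), cod p : ℕ) : ℝ)
          + ((∑ p ∈ U.offDiag.filter (fun p => ¬ C ≤ cod p), cod p : ℕ) : ℝ) := by
            rw [← Nat.cast_add, hsplit]
      _ ≤ (1 - 1/(k:ℝ)) * D2 + (Lord : ℝ) * C := add_le_add e2 e3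
  -- Cauchy-Schwarz
  have hCS : σ^2 ≤ (n:ℝ) * D2 := by
    have h := sq_sum_le_card_mul_sum_sq (s := B) (f := fun b => ((d b : ℕ) : ℝ))
    rw [hσ, hD2, ← hB]
    exact_mod_cast h
  -- numeric facts
  have hK0 : (0:ℝ) < (k:ℝ) := by exact_mod_cast Nat.lt_of_lt_of_le Nat.zero_lt_two hk2
  have hK2 : (2:ℝ) ≤ (k:ℝ) := by exact_mod_cast hk2
  have hkst : (k:ℝ) ≤ (s:ℝ) + t := by
    have : k ≤ s + t := by omega
    exact_mod_cast this
  have hst4' : (4:ℝ) ≤ (s:ℝ) + t := by exact_mod_cast hst4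
  have hCr1 : (1:ℝ) ≤ (C:ℝ) := by
    have : 0 < C := Nat.choose_pos (by omega)
    exact_mod_cast this
  have hCst : (C:ℝ) ≤ ((s:ℝ) + t)^2 := by
    have h1 : C ≤ (s + t) * (s + t) := by
      rw [hC, Nat.choose_two_right]
      exact le_trans (Nat.div_le_self _ _) (Nat.mul_le_mul (by omega) (by omega))
    calc (C:ℝ) ≤ (((s + t) * (s + t) : ℕ) : ℝ) := by exact_mod_cast h1
      _ = ((s:ℝ) + t)^2 := by push_cast; ring
  have hδm : (δ:ℝ) * U.card ≤ σ := by
    calc (δ:ℝ) * U.card = ((δ * U.card : ℕ) : ℝ) := by push_cast; ring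
      _ ≤ σ := by rw [hσ, ← Nat.cast_sum]; exact_mod_cast hσδ
  have h8 : 8 * ((s:ℝ) + t) * n ≤ (δ:ℝ) * U.card := by
    have hδ0 : (0:ℝ) < δ := by exact_mod_cast hδpos
    rw [div_le_iff₀ hδ0] at hU1
    calc 8 * ((s:ℝ) + t) * n = 8 * ((s:ℝ) + (t:ℝ)) * (n:ℝ) := by ring
      _ ≤ (U.card : ℝ) * δ := by exact_mod_cast hU1
      _ = (δ:ℝ) * U.card := by ring
  have hn1 : (1:ℝ) ≤ (n:ℝ) := by exact_mod_cast hnpos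
  have hδ1 : (1:ℝ) ≤ (δ:ℝ) := by exact_mod_cast hδpos
  have hm2 : (2:ℝ) ≤ (U.card:ℝ) := by exact_mod_cast hU2
  have hch : ((U.card.choose 2 : ℕ):ℝ) * 2 ≤ (U.card:ℝ)^2 := by
    have h1 : U.card.choose 2 * 2 ≤ U.card * U.card := by
      rw [Nat.choose_two_right]
      exact le_trans (Nat.div_mul_le_self _ _) (Nat.mul_le_mul_left _ (Nat.sub_le _ _))
    calc ((U.card.choose 2 : ℕ):ℝ) * 2 = ((U.card.choose 2 * 2 : ℕ) : ℝ) := by push_cast; ring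
      _ ≤ (((U.card * U.card : ℕ)) : ℝ) := by exact_mod_cast h1
      _ = (U.card:ℝ)^2 := by push_cast; ring
  have hLr0 : (0:ℝ) ≤ (Lord:ℝ) := Nat.cast_nonneg _
  -- clear the 1/k
  have hP1 : D2 ≤ (k:ℝ) * σ + (k:ℝ) * ((Lord:ℝ) * C) := by
    have e : (k:ℝ) * ((1 - 1/(k:ℝ)) * D2) = ((k:ℝ) - 1) * D2 := by field_simp
    have h := mul_le_mul_of_nonneg_left hstar (le_of_lt hK0)
    have h2 : (k:ℝ) * ((1 - 1 / ↑k) * D2 + (Lord:ℝ) * C)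
        = (k:ℝ) * ((1 - 1/(k:ℝ)) * D2) + (k:ℝ) * ((Lord:ℝ) * C) := by ring
    rw [h2, e] at h
    nlinarith [h]
  -- final arithmetic
  have hσ0 : (0:ℝ) < σ := by
    have h32 : (32:ℝ) ≤ 8 * ((s:ℝ) + t) * n := by
      nlinarith [mul_nonneg (by linarith : (0:ℝ) ≤ (s:ℝ) + t - 4)
        (by linarith : (0:ℝ) ≤ (n:ℝ) - 1), hst4', hn1]
    linarith
  have hq2' : (n:ℝ) * (k:ℝ) ≤ σ / 8 := by
    have h1 : (n:ℝ) * (k:ℝ) ≤ (n:ℝ) * ((s:ℝ) + t) :=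
      mul_le_mul_of_nonneg_left hkst (by linarith)
    nlinarith
  have hq1 : σ^2 ≤ (n:ℝ) * ((k:ℝ) * σ) + (n:ℝ) * ((k:ℝ) * ((Lord:ℝ) * C)) := by
    have h := mul_le_mul_of_nonneg_left hP1 (by linarith : (0:ℝ) ≤ (n:ℝ))
    have h2 : (n:ℝ) * ((k:ℝ) * σ + (k:ℝ) * ((Lord:ℝ) * C))
        = (n:ℝ) * ((k:ℝ) * σ) + (n:ℝ) * ((k:ℝ) * ((Lord:ℝ) * C)) := by ring
    rw [h2] at h
    linarith [hCS]
  have hq3 : 7 * σ^2 ≤ 8 * ((n:ℝ) * ((k:ℝ) * ((Lord:ℝ) * C))) := by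
    have h := mul_le_mul_of_nonneg_right hq2' (le_of_lt hσ0)
    have h2 : (n:ℝ) * ((k:ℝ) * σ) = (n:ℝ) * (k:ℝ) * σ := by ring
    have h3 : σ / 8 * σ = σ^2 / 8 := by ring
    rw [h3] at h
    linarith [hq1, h, h2]
  have hq4 : (n:ℝ) * ((k:ℝ) * ((Lord:ℝ) * C)) ≤ ((s:ℝ)+t)^3 * (n:ℝ) * Lord := by
    have h1 : (k:ℝ) * C ≤ ((s:ℝ)+t) * ((s:ℝ)+t)^2 :=
      mul_le_mul hkst hCst (by linarith) (by linarith)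
    have h := mul_le_mul_of_nonneg_left h1
      (mul_nonneg (by linarith : (0:ℝ) ≤ (n:ℝ)) hLr0)
    calc (n:ℝ) * ((k:ℝ) * ((Lord:ℝ) * C)) = (n:ℝ) * (Lord:ℝ) * ((k:ℝ) * C) := by ring
      _ ≤ (n:ℝ) * (Lord:ℝ) * (((s:ℝ)+t) * ((s:ℝ)+t)^2) := h
      _ = ((s:ℝ)+t)^3 * (n:ℝ) * Lord := by ring
  have hq5 : (δ:ℝ)^2 * (U.card:ℝ)^2 ≤ σ^2 := by
    have h := mul_self_le_mul_self (by positivity : (0:ℝ) ≤ (δ:ℝ)*(U.card:ℝ)) hδm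
    calc (δ:ℝ)^2 * (U.card:ℝ)^2 = ((δ:ℝ)*U.card) * ((δ:ℝ)*U.card) := by ring
      _ ≤ σ * σ := h
      _ = σ^2 := by ring
  have hmain : (δ:ℝ)^2 * (U.card:ℝ)^2 ≤ 8 * (((s:ℝ)+t)^3 * (n:ℝ) * Lord) := by
    have hX0 : (0:ℝ) ≤ ((s:ℝ)+t)^3 * (n:ℝ) * Lord := by positivity
    linarith [hq3, hq4, hq5, hX0]
  -- conclude
  rw [div_mul_eq_mul_div, div_le_div_iff₀ (by positivity) (by norm_num : (0:ℝ) < 2)]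
  have hfin := mul_le_mul_of_nonneg_left hch (sq_nonneg (δ:ℝ))
  have e1 : (δ:ℝ)^2 * (((U.card.choose 2 : ℕ):ℝ) * 2)
      = (δ:ℝ)^2 * ((U.card.choose 2 : ℕ):ℝ) * 2 := by ring
  rw [e1] at hfin
  linarith [hmain, hfin]
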